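/- Let n ≥ 3, let 1 ≤ a < b < n/2, let η = e^{2πi/n}, and let D ∈ ℂ[X] be the polynomial with (X−η^{a})(X−η^{−a})(X−η^{b})(X−η^{−b})·D(X) = ((η^{a}+η^{−a}−η^{b}−η^{−b})/n)·X(X²−1)(X^{n}−1). Then the number of roots of D in ℂ, counted with multiplicity, whose argument (taken in [0,2π)) lies in the open interval (0, 2πa/n) equals a − 1, and the number of roots of D, counted with multiplicity, whose argument lies in the open interval (0, 2πb/n) equals b − 2. Consequently, since a(D) + A(D) = n and 1 is a root of D of multiplicity 2, the perversity function values are π_{κ/d}(I₂(n)[a,b]) = 2a for κ/d = a/n and π_{κ/d}(I₂(n)[a,b]) = 2b − 1 for κ/d = b/n. -/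

import Mathlib

open Polynomial

/-- The argument of a complex number taken in `[0, 2π)`. -/
noncomputable def arg2pi (z : ℂ) : ℝ :=
  if 0 ≤ Complex.arg z then Complex.arg z else Complex.arg z + 2 * Real.pi

private lemma arg2pi_exp {θ : ℝ} (h0 : 0 ≤ θ) (h2 : θ < 2 * Real.pi) :
    arg2pi (Complex.exp (θ * Complex.I)) = θ := by
  rcases le_or_gt θ Real.pi with h | h
  · have harg : Complex.arg (Complex.exp ((θ : ℂ) * Complex.I)) = θ := by
      rw [Complex.exp_mul_I]
      exact Complex.arg_cos_add_sin_mul_I (θ := θ) ⟨by linarith [Real.pi_pos], h⟩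
    rw [arg2pi, harg, if_pos h0]
  · have he : Complex.exp ((θ : ℂ) * Complex.I)
        = Complex.exp (((θ - 2 * Real.pi : ℝ) : ℂ) * Complex.I) := by
      have hz : ((θ : ℂ) * Complex.I)
          = ((θ - 2 * Real.pi : ℝ) : ℂ) * Complex.I + 2 * Real.pi * Complex.I := by
        push_cast; ring
      rw [hz, Complex.exp_add, Complex.exp_two_pi_mul_I, mul_one]
    have harg : Complex.arg (Complex.exp ((θ : ℂ) * Complex.I)) = θ - 2 * Real.pi := by
      rw [he, Complex.exp_mul_I]
      exact Complex.arg_cos_add_sin_mul_I (θ := θ - 2 * Real.pi)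
        ⟨by linarith, by linarith [Real.pi_pos]⟩
    rw [arg2pi, harg, if_neg (by linarith)]
    ring

open Classical in
/-- For `n ≥ 3`, `1 ≤ a < b < n/2`, `η = e^{2πi/n}`, and `D` the generic degree of
`I₂(n)[a,b]`: the number of roots of `D` (with multiplicity) with argument in `(0, 2πa/n)` is
`a − 1`, the number with argument in `(0, 2πb/n)` is `b − 2`; consequently, since
`a(D) + A(D) = n` and `1` is a root of `D` of multiplicity `2`, the perversity values are
`π_{a/n}(I₂(n)[a,b]) = 2a` and `π_{b/n}(I₂(n)[a,b]) = 2b − 1`. -/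
theorem I2ab_perversity (n : ℕ) (hn : 3 ≤ n) (a b : ℕ) (ha : 1 ≤ a) (hab : a < b)
    (hb : 2 * b < n) (η : ℂ) (hη : η = Complex.exp (2 * Real.pi * Complex.I / (n : ℂ)))
    (D : ℂ[X])
    (hD : (X - C (η ^ a)) * (X - C ((η ^ a)⁻¹)) * (X - C (η ^ b)) * (X - C ((η ^ b)⁻¹)) * D =
      C ((η ^ a + (η ^ a)⁻¹ - η ^ b - (η ^ b)⁻¹) / (n : ℂ)) *
        (X * (X ^ 2 - 1) * (X ^ n - 1))) :
    (D.roots.filter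
        (fun z => 0 < arg2pi z ∧ arg2pi z < 2 * Real.pi * (a : ℝ) / (n : ℝ))).card = a - 1 ∧
    (D.roots.filter
        (fun z => 0 < arg2pi z ∧ arg2pi z < 2 * Real.pi * (b : ℝ) / (n : ℝ))).card = b - 2 ∧
    D.rootMultiplicity 0 + D.natDegree = n ∧ D.rootMultiplicity 1 = 2 ∧
    ((a : ℝ) / (n : ℝ)) * ((D.rootMultiplicity 0 : ℝ) + (D.natDegree : ℝ)) +
        ((D.roots.filter
          (fun z => 0 < arg2pi z ∧ arg2pi z < 2 * Real.pi * (a : ℝ) / (n : ℝ))).card : ℝ) +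
        (D.rootMultiplicity 1 : ℝ) / 2 = 2 * (a : ℝ) ∧
    ((b : ℝ) / (n : ℝ)) * ((D.rootMultiplicity 0 : ℝ) + (D.natDegree : ℝ)) +
        ((D.roots.filter
          (fun z => 0 < arg2pi z ∧ arg2pi z < 2 * Real.pi * (b : ℝ) / (n : ℝ))).card : ℝ) +
        (D.rootMultiplicity 1 : ℝ) / 2 = 2 * (b : ℝ) - 1 := by
  have hn5 : 5 ≤ n := by omega
  have hnpos : 0 < n := by omega
  have hnC : (n : ℂ) ≠ 0 := Nat.cast_ne_zero.2 (by omega)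
  have hnR : (0 : ℝ) < n := by exact_mod_cast hnpos
  have hπ := Real.pi_pos
  have hprim : IsPrimitiveRoot η n := hη ▸ Complex.isPrimitiveRoot_exp n (by omega)
  -- powers of η as exponentials
  have hpow : ∀ k : ℕ, η ^ k = Complex.exp ((2 * Real.pi * (k : ℝ) / n : ℝ) * Complex.I) := by
    intro k
    rw [hη, ← Complex.exp_nat_mul]
    congr 1
    push_cast
    field_simp
  -- comparison of angles
  have hlt : ∀ k m : ℕ, (2 * Real.pi * (k : ℝ) / n < 2 * Real.pi * (m : ℝ) / n ↔ k < m) := by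
    intro k m
    rw [div_lt_div_iff_of_pos_right hnR, mul_lt_mul_iff_right₀ (by positivity), Nat.cast_lt]
  have hpos' : ∀ k : ℕ, (0 < 2 * Real.pi * (k : ℝ) / n ↔ 0 < k) := by
    intro k
    have := hlt 0 k
    simpa using this
  have h2pi : 2 * Real.pi * (n : ℝ) / n = 2 * Real.pi := by field_simp
  -- arguments of the powers
  have harg : ∀ k : ℕ, k < n → arg2pi (η ^ k) = 2 * Real.pi * (k : ℝ) / n := by
    intro k hk
    rw [hpow k]
    refine arg2pi_exp (by positivity) ?_
    have h' := (hlt k n).2 hk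
    rwa [h2pi] at h'
  -- inverses
  have hηne : η ≠ 0 := by rw [hη]; exact Complex.exp_ne_zero _
  have hinv : ∀ k : ℕ, k ≤ n → (η ^ k)⁻¹ = η ^ (n - k) := by
    intro k hk
    symm
    apply eq_inv_of_mul_eq_one_left
    rw [← pow_add]
    have : n - k + k = n := by omega
    rw [this, hprim.pow_eq_one]
  -- the constant is nonzero
  have hre : ∀ k : ℕ, η ^ k + (η ^ k)⁻¹ = ((2 * Real.cos (2 * Real.pi * (k : ℝ) / n) : ℝ) : ℂ) := by
    intro k
    rw [hpow k, ← Complex.exp_neg, ← neg_mul, ← Complex.two_cos, ← Complex.ofReal_cos]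
    push_cast
    ring
  have hcoslt : Real.cos (2 * Real.pi * (b : ℝ) / n) < Real.cos (2 * Real.pi * (a : ℝ) / n) := by
    apply Real.cos_lt_cos_of_nonneg_of_le_pi (by positivity)
    · have h2b : 2 * Real.pi * (b : ℝ) / n ≤ 2 * Real.pi * (b : ℝ) / n := le_refl _
      have : (2 * b : ℝ) < n := by exact_mod_cast hb
      rw [div_le_iff₀ hnR]
      nlinarith
    · exact (hlt a b).2 hab
  have hcne : (η ^ a + (η ^ a)⁻¹ - η ^ b - (η ^ b)⁻¹) / (n : ℂ) ≠ 0 := by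
    apply div_ne_zero _ hnC
    rw [sub_sub, hre a, hre b, ← Complex.ofReal_sub]
    rw [Ne, Complex.ofReal_eq_zero]
    nlinarith
  -- rewrite hD in power form
  rw [hinv a (by omega), hinv b (by omega)] at hD
  set c : ℂ := (η ^ a + η ^ (n - a) - η ^ b - η ^ (n - b)) / (n : ℂ) with hc_def
  have hc : c ≠ 0 := by
    rw [hc_def, ← hinv a (by omega), ← hinv b (by omega)]
    exact hcne
  -- the finset of remaining indices
  set F : Finset ℕ := Finset.range n \ {a, n - a, b, n - b} with hF_def
  have hsub : ({a, n - a, b, n - b} : Finset ℕ) ⊆ Finset.range n := by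
    intro x hx
    simp only [Finset.mem_insert, Finset.mem_singleton] at hx
    simp only [Finset.mem_range]
    omega
  have hquad : ∏ i ∈ ({a, n - a, b, n - b} : Finset ℕ), (X - C (η ^ i)) =
      (X - C (η ^ a)) * (X - C (η ^ (n - a))) * (X - C (η ^ b)) * (X - C (η ^ (n - b))) := by
    rw [Finset.prod_insert (by simp; omega), Finset.prod_insert (by simp; omega),
      Finset.prod_insert (by simp; omega), Finset.prod_singleton]
    ring
  have hXn : (X : ℂ[X]) ^ n - 1 =
      (∏ i ∈ F, (X - C (η ^ i))) *
        ((X - C (η ^ a)) * (X - C (η ^ (n - a))) * (X - C (η ^ b)) * (X - C (η ^ (n - b)))) := by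
    have h1 : (X : ℂ[X]) ^ n - 1 = ∏ i ∈ Finset.range n, (X - C (η ^ i)) := by
      have := X_pow_sub_C_eq_prod hprim hnpos (one_pow n)
      simpa using this
    rw [h1, ← Finset.prod_sdiff hsub, hquad]
  -- cancel the quadratic factors
  have key : (X - C (η ^ a)) * (X - C (η ^ (n - a))) * (X - C (η ^ b)) * (X - C (η ^ (n - b))) * D
      = (X - C (η ^ a)) * (X - C (η ^ (n - a))) * (X - C (η ^ b)) * (X - C (η ^ (n - b))) *
        (C c * (X * (X + 1) * (X - 1) * ∏ i ∈ F, (X - C (η ^ i)))) := by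
    rw [hD, hXn]
    ring
  have hP : (X - C (η ^ a)) * (X - C (η ^ (n - a))) * (X - C (η ^ b)) * (X - C (η ^ (n - b)))
      ≠ (0 : ℂ[X]) :=
    mul_ne_zero (mul_ne_zero (mul_ne_zero (X_sub_C_ne_zero _) (X_sub_C_ne_zero _))
      (X_sub_C_ne_zero _)) (X_sub_C_ne_zero _)
  have hDQ : D = C c * (X * (X + 1) * (X - 1) * ∏ i ∈ F, (X - C (η ^ i))) :=
    mul_left_cancel₀ hP key
  -- multiset form
  set M : Multiset ℂ := 0 ::ₘ (-1) ::ₘ 1 ::ₘ F.val.map (fun k => η ^ k) with hM_def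
  have hprodM : X * (X + 1) * (X - 1) * ∏ i ∈ F, (X - C (η ^ i))
      = (M.map fun z => (X : ℂ[X]) - C z).prod := by
    rw [hM_def]
    simp only [Multiset.map_cons, Multiset.prod_cons, Multiset.map_map, Function.comp]
    rw [← Finset.prod_eq_multiset_prod]
    simp only [map_zero, map_one, map_neg, sub_zero, sub_neg_eq_add]
    ring
  have hroots : D.roots = M := by
    rw [hDQ, hprodM, roots_C_mul _ hc, roots_multiset_prod_X_sub_C]
  have hFcard : F.card = n - 4 := by
    rw [hF_def, Finset.card_sdiff_of_subset hsub, Finset.card_range]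
    have h4 : ({a, n - a, b, n - b} : Finset ℕ).card = 4 := by
      rw [Finset.card_insert_of_notMem (by simp; omega),
        Finset.card_insert_of_notMem (by simp; omega),
        Finset.card_insert_of_notMem (by simp; omega), Finset.card_singleton]
    rw [h4]
  have hdeg : D.natDegree = n - 1 := by
    rw [hDQ, hprodM, natDegree_C_mul hc, natDegree_multiset_prod_X_sub_C_eq_card, hM_def]
    simp only [Multiset.card_cons, Multiset.card_map]
    rw [show F.val.card = F.card from rfl, hFcard]
    omega
  -- root multiplicities
  have hmapne0 : Multiset.count (0 : ℂ) (F.val.map fun k => η ^ k) = 0 := by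
    rw [Multiset.count_eq_zero]
    intro hmem
    obtain ⟨k, _, hk⟩ := Multiset.mem_map.1 hmem
    exact pow_ne_zero k hηne hk
  have hm0 : D.rootMultiplicity 0 = 1 := by
    rw [← count_roots, hroots, hM_def, Multiset.count_cons_self,
      Multiset.count_cons_of_ne (by norm_num), Multiset.count_cons_of_ne (by norm_num), hmapne0]
  have h0F : 0 ∈ F := by
    rw [hF_def]
    simp only [Finset.mem_sdiff, Finset.mem_range, Finset.mem_insert, Finset.mem_singleton]
    omega
  have hmap1 : Multiset.count (1 : ℂ) (F.val.map fun k => η ^ k) = 1 := by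
    rw [Multiset.count_map]
    have hfe : F.val.filter (fun k => (1 : ℂ) = η ^ k) = (F.filter fun k => (1 : ℂ) = η ^ k).val :=
      (Finset.filter_val _ _).symm
    rw [hfe]
    have : (F.filter fun k => (1 : ℂ) = η ^ k) = {0} := by
      ext k
      simp only [Finset.mem_filter, Finset.mem_singleton]
      constructor
      · rintro ⟨hkF, hk1⟩
        have hkn : k < n := by
          have := (Finset.mem_sdiff.1 (hF_def ▸ hkF)).1
          simpa using this
        have : η ^ k = 1 := hk1.symm
        have hdvd : n ∣ k := (hprim.pow_eq_one_iff_dvd k).1 this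
        exact Nat.eq_zero_of_dvd_of_lt hdvd hkn
      · rintro rfl
        exact ⟨h0F, by simp⟩
    rw [this]
    rfl
  have hm1 : D.rootMultiplicity 1 = 2 := by
    rw [← count_roots, hroots, hM_def, Multiset.count_cons_of_ne (by norm_num),
      Multiset.count_cons_of_ne (by norm_num), Multiset.count_cons_self, hmap1]
  -- arg2pi of the special roots
  have harg0 : arg2pi (0 : ℂ) = 0 := by rw [arg2pi, Complex.arg_zero]; simp
  have harg1 : arg2pi (1 : ℂ) = 0 := by rw [arg2pi, Complex.arg_one]; simp
  have hargneg1 : arg2pi (-1 : ℂ) = Real.pi := by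
    rw [arg2pi, Complex.arg_neg_one, if_pos (le_of_lt hπ)]
  -- the half-plane bounds
  have hhalf : ∀ m : ℕ, 2 * m < n → 2 * Real.pi * (m : ℝ) / n < Real.pi := by
    intro m hm
    have : (2 * m : ℝ) < n := by exact_mod_cast hm
    rw [div_lt_iff₀ hnR]
    nlinarith
  -- generic filter computation
  have hfilter : ∀ m : ℕ, 2 * m < n →
      (Multiset.filter (fun z => 0 < arg2pi z ∧ arg2pi z < 2 * Real.pi * (m : ℝ) / n) M).card
        = (F.filter fun k => 0 < k ∧ k < m).card := by
    intro m hm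
    have hmhalf := hhalf m hm
    rw [hM_def,
      Multiset.filter_cons_of_neg _ (by rw [harg0]; simp),
      Multiset.filter_cons_of_neg _ (by rw [hargneg1]; push_neg; intro; linarith),
      Multiset.filter_cons_of_neg _ (by rw [harg1]; simp),
      Multiset.filter_map]
    rw [Multiset.card_map]
    have hcongr : Multiset.filter
        ((fun z => 0 < arg2pi z ∧ arg2pi z < 2 * Real.pi * (m : ℝ) / n) ∘ fun k => η ^ k) F.val
        = (F.filter fun k => 0 < k ∧ k < m).val := by
      rw [Finset.filter_val]
      apply Multiset.filter_congr
      intro k hkF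
      have hkn : k < n := by
        have := (Finset.mem_sdiff.1 (show k ∈ Finset.range n \ {a, n - a, b, n - b} from hF_def ▸ hkF)).1
        simpa using this
      simp only [Function.comp, harg k hkn, hpos' k, hlt k m]
    rw [hcongr]
    rfl
  -- the two counts
  have hfa : (F.filter fun k => 0 < k ∧ k < a).card = a - 1 := by
    have : (F.filter fun k => 0 < k ∧ k < a) = Finset.Ico 1 a := by
      ext k
      rw [hF_def]
      simp only [Finset.mem_filter, Finset.mem_sdiff, Finset.mem_range, Finset.mem_insert,
        Finset.mem_singleton, Finset.mem_Ico]
      omega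
    rw [this, Nat.card_Ico]
  have hfb : (F.filter fun k => 0 < k ∧ k < b).card = b - 2 := by
    have : (F.filter fun k => 0 < k ∧ k < b) = (Finset.Ico 1 b).erase a := by
      ext k
      rw [hF_def]
      simp only [Finset.mem_filter, Finset.mem_sdiff, Finset.mem_range, Finset.mem_insert,
        Finset.mem_singleton, Finset.mem_erase, Finset.mem_Ico]
      omega
    rw [this, Finset.card_erase_of_mem (by simp [Finset.mem_Ico]; omega), Nat.card_Ico]
    omega
  have hca : (D.roots.filter
      (fun z => 0 < arg2pi z ∧ arg2pi z < 2 * Real.pi * (a : ℝ) / (n : ℝ))).card = a - 1 := by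
    rw [hroots, hfilter a (by omega), hfa]
  have hcb : (D.roots.filter
      (fun z => 0 < arg2pi z ∧ arg2pi z < 2 * Real.pi * (b : ℝ) / (n : ℝ))).card = b - 2 := by
    rw [hroots, hfilter b hb, hfb]
  refine ⟨hca, hcb, by rw [hm0, hdeg]; omega, hm1, ?_, ?_⟩
  · rw [hca, hm0, hm1, hdeg]
    have h1 : ((a - 1 : ℕ) : ℝ) = (a : ℝ) - 1 := by
      have : (1 : ℕ) ≤ a := ha
      push_cast [Nat.cast_sub this]
      ring
    have h2 : ((n - 1 : ℕ) : ℝ) = (n : ℝ) - 1 := by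
      push_cast [Nat.cast_sub (by omega : 1 ≤ n)]
      ring
    rw [h1, h2]
    push_cast
    field_simp
    ring
  · rw [hcb, hm0, hm1, hdeg]
    have h1 : ((b - 2 : ℕ) : ℝ) = (b : ℝ) - 2 := by
      push_cast [Nat.cast_sub (by omega : 2 ≤ b)]
      ring
    have h2 : ((n - 1 : ℕ) : ℝ) = (n : ℝ) - 1 := by
      push_cast [Nat.cast_sub (by omega : 1 ≤ n)]
      ring
    rw [h1, h2]
    push_cast
    field_simp
    ring
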